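/- Let g(z) = (z − a_1)⋯(z − a_m) ∈ ℂ[z] with m ≥ 2, let d ≥ 1, f(z) = g(z^d), and suppose z ∈ ℂ satisfies d·log|z| > log⁺ max_i|a_i| + (m/(m−1))·log 2. Then |z^d − a_i| > |z|^d/2 for all i, and log|f(z)| ≥ (dm)·log|z| − m·log 2; moreover f(z) again satisfies the same hypothesis: d·log|f(z)| > log⁺ max_i|a_i| + (m/(m−1))·log 2. -/

import Mathlib

open Polynomial

/-- `log⁺ t = max (log t) 0`. -/
noncomputable def logPlus (t : ℝ) : ℝ := max (Real.log t) 0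

/-- Archimedean escape: if `g(z) = (z-a_1)⋯(z-a_m)` with `m ≥ 2`, `f(z) = g(z^d)`
and `d·log|z| > log⁺ max_i |a_i| + (m/(m-1))·log 2`, then `|z^d - a_i| > |z|^d/2`
for all `i`, `log|f(z)| ≥ dm·log|z| - m·log 2`, and `f(z)` satisfies the same
hypothesis. -/
theorem arch_escape_step (m : ℕ) (hm : 2 ≤ m) (d : ℕ) (hd : 1 ≤ d)
    (a : Fin m → ℂ) (g : Polynomial ℂ) (hg : g = ∏ i : Fin m, (X - C (a i)))
    (f : Polynomial ℂ) (hf : f = g.comp (X ^ d))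
    (z : ℂ) (hz : (d : ℝ) * Real.log (‖z‖) >
      logPlus (⨆ i, ‖a i‖) + ((m : ℝ) / (m - 1)) * Real.log 2) :
    (∀ i, ‖z ^ d - a i‖ > ‖z‖ ^ d / 2) ∧
    Real.log (‖f.eval z‖) ≥
      ((d * m : ℕ) : ℝ) * Real.log (‖z‖) - m * Real.log 2 ∧
    (d : ℝ) * Real.log (‖f.eval z‖) >
      logPlus (⨆ i, ‖a i‖) + ((m : ℝ) / (m - 1)) * Real.log 2 := by
  have hmR : (2:ℝ) ≤ (m:ℝ) := by exact_mod_cast hm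
  have hm1 : (0:ℝ) < (m:ℝ) - 1 := by linarith
  have hdR : (1:ℝ) ≤ (d:ℝ) := by exact_mod_cast hd
  have hlog2 : (0:ℝ) < Real.log 2 := Real.log_pos one_lt_two
  have hratio : (1:ℝ) ≤ (m:ℝ) / ((m:ℝ) - 1) := by
    rw [le_div_iff₀ hm1]; linarith
  set A := ⨆ i, ‖a i‖ with hA
  have hbdd : BddAbove (Set.range fun i => ‖a i‖) :=
    Set.Finite.bddAbove (Set.finite_range _)
  have hAle : ∀ i, ‖a i‖ ≤ A := fun i => le_ciSup hbdd i
  have hA0 : 0 ≤ A := le_trans (norm_nonneg _) (hAle ⟨0, by omega⟩)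
  have hL0 : 0 ≤ logPlus A := le_max_right _ _
  have hAexp : A ≤ Real.exp (logPlus A) := by
    rcases lt_or_eq_of_le hA0 with h0 | h0
    · calc A = Real.exp (Real.log A) := (Real.exp_log h0).symm
        _ ≤ _ := Real.exp_le_exp.2 (le_max_left _ _)
    · rw [← h0]; exact (Real.exp_pos _).le
  set r := ‖z‖ with hr
  have hz' : (d:ℝ) * Real.log r > logPlus A + Real.log 2 := by
    have h := le_mul_of_one_le_left hlog2.le hratio
    linarith
  have hlogr : 0 < Real.log r := by
    nlinarith [hz', hL0, hlog2, hdR]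
  have hr1 : 1 < r := by
    by_contra h
    push_neg at h
    have : Real.log r ≤ 0 := Real.log_nonpos (norm_nonneg z) h
    linarith
  have hr0 : 0 < r := lt_trans one_pos hr1
  have hrd0 : 0 < r ^ d := pow_pos hr0 d
  have hrdexp : r ^ d = Real.exp ((d:ℝ) * Real.log r) := by
    rw [← Real.log_pow, Real.exp_log hrd0]
  have h2A : 2 * A < r ^ d := by
    rw [hrdexp]
    calc 2 * A ≤ 2 * Real.exp (logPlus A) := by linarith
      _ = Real.exp (logPlus A + Real.log 2) := by
          rw [Real.exp_add, Real.exp_log two_pos]; ring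
      _ < Real.exp ((d:ℝ) * Real.log r) := Real.exp_lt_exp.2 hz'
  have h1 : ∀ i, ‖z ^ d - a i‖ > r ^ d / 2 := by
    intro i
    have hsub : ‖z ^ d‖ - ‖a i‖ ≤ ‖z ^ d - a i‖ := by
      simpa using norm_sub_norm_le (z ^ d) (a i)
    have hzd : ‖z ^ d‖ = r ^ d := by rw [norm_pow]
    have := hAle i
    rw [hzd] at hsub
    linarith
  have hfe : f.eval z = ∏ i, (z ^ d - a i) := by
    rw [hf, eval_comp, eval_pow, eval_X, hg, eval_prod]
    simp
  have habs : ‖f.eval z‖ = ∏ i, ‖z ^ d - a i‖ := by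
    rw [hfe, norm_prod]
  have hc0 : (0:ℝ) < r ^ d / 2 := by positivity
  have hprod : (r ^ d / 2) ^ m ≤ ‖f.eval z‖ := by
    rw [habs]
    calc (r ^ d / 2) ^ m = ∏ _i : Fin m, (r ^ d / 2) := by simp [div_pow]
      _ ≤ ∏ i, ‖z ^ d - a i‖ :=
          Finset.prod_le_prod (fun i _ => hc0.le) (fun i _ => (h1 i).le)
  have hlogf : (m:ℝ) * ((d:ℝ) * Real.log r - Real.log 2)
      ≤ Real.log (‖f.eval z‖) := by
    have h := Real.log_le_log (pow_pos hc0 m) hprod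
    rwa [Real.log_pow, Real.log_div (pow_ne_zero _ hr0.ne') two_ne_zero,
      Real.log_pow] at h
  refine ⟨h1, ?_, ?_⟩
  · push_cast
    linarith [hlogf]
  · have key : (m:ℝ) * ((m:ℝ) / ((m:ℝ) - 1) - 1) = (m:ℝ) / ((m:ℝ) - 1) := by
      field_simp; ring
    have key4 : (m:ℝ) * ((m:ℝ) / ((m:ℝ) - 1)) * Real.log 2
        = ((m:ℝ) / ((m:ℝ) - 1)) * Real.log 2 + (m:ℝ) * Real.log 2 := by
      field_simp; ring
    have hmul := mul_lt_mul_of_pos_left hz (by linarith : (0:ℝ) < (m:ℝ))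
    have step : (m:ℝ) * ((d:ℝ) * Real.log r - Real.log 2)
        > (m:ℝ) * logPlus A + ((m:ℝ) / ((m:ℝ) - 1)) * Real.log 2 := by
      nlinarith [hmul, key4]
    have hLm : logPlus A ≤ (m:ℝ) * logPlus A :=
      le_mul_of_one_le_left hL0 (by linarith)
    have hfgt : Real.log (‖f.eval z‖)
        > logPlus A + ((m:ℝ) / ((m:ℝ) - 1)) * Real.log 2 := by
      linarith [hlogf, step, hLm]
    have hll : Real.log 2 ≤ ((m:ℝ) / ((m:ℝ) - 1)) * Real.log 2 :=
      le_mul_of_one_le_left hlog2.le hratio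
    have hfpos : 0 < Real.log (‖f.eval z‖) := by linarith
    have hdf : Real.log (‖f.eval z‖) ≤
        (d:ℝ) * Real.log (‖f.eval z‖) :=
      le_mul_of_one_le_left hfpos.le hdR
    linarith
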